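/- (Derivation of the discrete Toda equation.) Let q : ℤ × ℤ → ℂ with q(n,m) ≠ 0 for all (n,m), let β : ℤ → ℂ, and use the shift notation q_{ij}(n,m) = q(n+i, m+j). Suppose there is a function f : ℤ × ℤ → ℂ satisfying, for all (n,m), both f = q₀₁/q₁₀ − q₁₀/q₁₁ + β(m) and f₀₁ = q₁₁/q₂₀ − q₁₀/q₁₁ + β(m). Then for all (n,m): q₁₁/q₂₀ − q₀₂/q₁₁ + q₁₁/q₁₂ − q₁₀/q₁₁ = β(m+1) − β(m). Equivalently, if w : ℤ × ℤ → ℂ is such that q(n,m) = exp(−w(n−1,m−1)), then w satisfies the discrete Toda type equation e^{w₁,₋₁ − w} − e^{w − w₋₁,₁} + e^{w₀₁ − w} − e^{w − w₀,₋₁} = β(m+1) − β(m). -/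
import Mathlib


/-- Derivation of the discrete Toda type equation from the compatibility of two
Darboux matrices for NLS. -/
theorem stmt_12 (q : ℤ × ℤ → ℂ) (hq : ∀ n m : ℤ, q (n, m) ≠ 0) (β : ℤ → ℂ)
    (f : ℤ × ℤ → ℂ)
    (hf : ∀ n m : ℤ, f (n, m) =
      q (n, m + 1) / q (n + 1, m) - q (n + 1, m) / q (n + 1, m + 1) + β m)
    (hf01 : ∀ n m : ℤ, f (n, m + 1) =
      q (n + 1, m + 1) / q (n + 2, m) - q (n + 1, m) / q (n + 1, m + 1) + β m) :
    (∀ n m : ℤ,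
      q (n + 1, m + 1) / q (n + 2, m) - q (n, m + 2) / q (n + 1, m + 1)
        + q (n + 1, m + 1) / q (n + 1, m + 2) - q (n + 1, m) / q (n + 1, m + 1)
      = β (m + 1) - β m) ∧
    (∀ w : ℤ × ℤ → ℂ, (∀ n m : ℤ, q (n, m) = Complex.exp (-w (n - 1, m - 1))) →
      ∀ n m : ℤ,
        Complex.exp (w (n + 1, m - 1) - w (n, m))
          - Complex.exp (w (n, m) - w (n - 1, m + 1))
          + Complex.exp (w (n, m + 1) - w (n, m))
          - Complex.exp (w (n, m) - w (n, m - 1))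
        = β (m + 1) - β m) := by
  have key : ∀ n m : ℤ,
      q (n + 1, m + 1) / q (n + 2, m) - q (n, m + 2) / q (n + 1, m + 1)
        + q (n + 1, m + 1) / q (n + 1, m + 2) - q (n + 1, m) / q (n + 1, m + 1)
      = β (m + 1) - β m := by
    intro n m
    have h1 := hf n (m + 1)
    have h2 := hf01 n m
    have h1' : f (n, m + 1) =
        q (n, m + 1 + 1) / q (n + 1, m + 1) - q (n + 1, m + 1) / q (n + 1, m + 1 + 1)
          + β (m + 1) := h1
    rw [show m + 1 + 1 = m + 2 by ring] at h1'
    linear_combination h1' - h2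
  refine ⟨key, fun w hw n m => ?_⟩
  have h := key n m
  simp only [hw, ← Complex.exp_sub] at h
  simp only [show (n:ℤ)+1-1 = n from by ring, show (m:ℤ)+1-1 = m from by ring,
    show (n:ℤ)+2-1 = n+1 from by ring, show (m:ℤ)+2-1 = m+1 from by ring,
    neg_sub_neg] at h
  exact h
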